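/- arXiv:math/0412121 — 2 statements merged into one kernel-verified Lean document; each statement's English description precedes it below -/
import Mathlib

section
/- Let N ≥ 1 and n ≥ 2. Let A(z) = Σ_{j=−n}^{∞} A_j z^j be a formal Laurent series with coefficients A_j ∈ M_N(ℂ), such that the polar coefficients A_{−n}, …, A_{−1} are upper triangular and the leading coefficient A_{−n} is a diagonal matrix with pairwise distinct diagonal entries. Then there exists g ∈ GL_N(ℂ[[z]]) (an N×N matrix of formal power series whose constant term g(0) is invertible) whose reduction modulo z^n is unipotent upper triangular (i.e. as a matrix over ℂ[z]/(z^n) it is upper triangular with all diagonal entries equal to 1), such that the gauge transform g⋆A := g·A·g⁻¹ + g′·g⁻¹ has the normal form g⋆A = Σ_{j=1}^{n} α_j z^{−j} + Σ_{j=0}^{n−2} β_j z^j, where all α_j and β_j are diagonal matrices (in particular all coefficients in degrees ≥ n−1 vanish). -/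
open HahnSeries in
/-- The formal derivative of a complex Laurent series, `(Σ a_k z^k)' = Σ k·a_k z^{k−1}`,
defined coefficientwise. -/
noncomputable def laurentDeriv (f : LaurentSeries ℂ) : LaurentSeries ℂ where
  coeff k := ((k + 1 : ℤ) : ℂ) * f.coeff (k + 1)
  isPWO_support' := by
    apply Set.IsPWO.mono (f.isPWO_support'.image_of_monotone
      (f := fun k : ℤ => k - 1) (fun a b hab => by simpa using hab))
    intro k hk
    have : f.coeff (k + 1) ≠ 0 := by
      intro h
      simp [Function.mem_support, h] at hk
    exact ⟨k + 1, this, by ring⟩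

/-- The entrywise formal derivative of a matrix of Laurent series. -/
noncomputable def matrixLaurentDeriv {N : ℕ}
    (g : Matrix (Fin N) (Fin N) (LaurentSeries ℂ)) :
    Matrix (Fin N) (Fin N) (LaurentSeries ℂ) :=
  Matrix.of fun i j => laurentDeriv (g i j)

lemma coeff_derivativeFun_aux (f : PowerSeries ℂ) (n : ℕ) :
    PowerSeries.coeff n (PowerSeries.derivativeFun f) = PowerSeries.coeff (n + 1) f * (n + 1) :=
  PowerSeries.coeff_derivative f n


namespace NormalForm

abbrev Mx (N : ℕ) := Matrix (Fin N) (Fin N) ℂ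

noncomputable def solveP {N : ℕ} (a0 K : Mx N) : Mx N × Mx N :=
  (Matrix.of fun i j => if i = j then 0 else K i j / (a0 i i - a0 j j),
   Matrix.of fun i j => if i = j then K i j else 0)

noncomputable def normP {N : ℕ} (n : ℕ) (a : ℕ → Mx N) : ℕ → Mx N × Mx N
  | 0 => (1, a 0)
  | (m+1) =>
      solveP (a 0)
        ((∑ p : Fin (m+1), (normP n a p.1).1 * a (m + 1 - p.1))
          + ((m + 2 - n : ℕ) : ℂ) • (normP n a (min (m + 2 - n) m)).1
          - ∑ p : Fin m, (normP n a (p.1 + 1)).2 * (normP n a (m - p.1)).1)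
  termination_by m => m
  decreasing_by
  · exact p.isLt
  · omega
  · omega
  · omega

variable {N : ℕ} {n : ℕ} {a : ℕ → Mx N}

/-- coefficients of the gauge transformation -/
noncomputable def Gc (n : ℕ) (a : ℕ → Mx N) (m : ℕ) : Mx N := (normP n a m).1
/-- coefficients of the (pre-)normal form -/
noncomputable def Bc (n : ℕ) (a : ℕ → Mx N) (m : ℕ) : Mx N := (normP n a m).2

lemma Gc_zero : Gc n a 0 = 1 := by simp [Gc, normP]
lemma Bc_zero : Bc n a 0 = a 0 := by simp [Bc, normP]

lemma Gc_diag (m : ℕ) (i : Fin N) (hm : 1 ≤ m) : Gc n a m i i = 0 := by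
  cases m with
  | zero => omega
  | succ m => rw [Gc, normP]; simp [solveP]

lemma Bc_diag (m : ℕ) {i j : Fin N} (hij : i ≠ j) (hd : ∀ i j : Fin N, i ≠ j → a 0 i j = 0) :
    Bc n a m i j = 0 := by
  cases m with
  | zero => rw [Bc, normP]; exact hd i j hij
  | succ m => rw [Bc, normP]; simp [solveP, hij]

lemma solveP_spec (a0 K : Mx N) (hd : ∀ i j : Fin N, i ≠ j → a0 i j = 0)
    (hinj : ∀ i j : Fin N, a0 i i = a0 j j → i = j) :
    (solveP a0 K).1 * a0 + K = a0 * (solveP a0 K).1 + (solveP a0 K).2 := by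
  ext i j
  have hmulr : ((solveP a0 K).1 * a0) i j = (solveP a0 K).1 i j * a0 j j := by
    rw [Matrix.mul_apply]
    rw [Finset.sum_eq_single j]
    · intro b _ hb; rw [hd b j hb, mul_zero]
    · intro h; exact absurd (Finset.mem_univ j) h
  have hmull : (a0 * (solveP a0 K).1) i j = a0 i i * (solveP a0 K).1 i j := by
    rw [Matrix.mul_apply]
    rw [Finset.sum_eq_single i]
    · intro b _ hb; rw [hd i b (Ne.symm hb), zero_mul]
    · intro h; exact absurd (Finset.mem_univ i) h
  simp only [Matrix.add_apply, hmulr, hmull]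
  by_cases hij : i = j
  · subst hij
    simp [solveP]
  · have hne : a0 i i - a0 j j ≠ 0 := by
      intro h
      exact hij (hinj i j (by linear_combination h))
    simp only [solveP, Matrix.of_apply, if_neg hij]
    field_simp
    ring

/-- The master recursion identity. -/
lemma normE (hn : 2 ≤ n) (hd : ∀ i j : Fin N, i ≠ j → a 0 i j = 0)
    (hinj : ∀ i j : Fin N, a 0 i i = a 0 j j → i = j) (m : ℕ) :
    (∑ p ∈ Finset.range (m+1), Gc n a p * a (m - p))
      + ((m + 1 - n : ℕ) : ℂ) • Gc n a (m + 1 - n)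
      = ∑ p ∈ Finset.range (m+1), Bc n a p * Gc n a (m - p) := by
  cases m with
  | zero =>
      have h1 : 1 - n = 0 := by omega
      simp [h1, Gc_zero, Bc_zero]
  | succ m =>
      set K : Mx N :=
        ((∑ p : Fin (m+1), (normP n a p.1).1 * a (m + 1 - p.1))
          + ((m + 2 - n : ℕ) : ℂ) • (normP n a (min (m + 2 - n) m)).1
          - ∑ p : Fin m, (normP n a (p.1 + 1)).2 * (normP n a (m - p.1)).1) with hK
      have hmin : min (m + 2 - n) m = m + 2 - n := by omega
      have hG : Gc n a (m+1) = (solveP (a 0) K).1 := by rw [Gc, normP]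
      have hB : Bc n a (m+1) = (solveP (a 0) K).2 := by rw [Bc, normP]
      have hcore := solveP_spec (a 0) K hd hinj
      have hBval : (solveP (a 0) K).2
          = (solveP (a 0) K).1 * a 0 + K - a 0 * (solveP (a 0) K).1 := by
        rw [eq_sub_iff_add_eq, hcore]; abel
      have hKval : K = (∑ p ∈ Finset.range (m+1), Gc n a p * a (m + 1 - p))
          + ((m + 2 - n : ℕ) : ℂ) • Gc n a (m + 2 - n)
          - ∑ p ∈ Finset.range m, Bc n a (p + 1) * Gc n a (m - p) := by
        rw [hK, hmin]
        congr 1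
        · congr 1
          rw [Finset.sum_range fun p => Gc n a p * a (m + 1 - p)]
          rfl
        · rw [Finset.sum_range fun p => Bc n a (p + 1) * Gc n a (m - p)]
          rfl
      rw [hKval] at hBval
      -- expand the sums
      rw [Finset.sum_range_succ (fun p => Gc n a p * a (m + 1 - p)) (m+1)]
      rw [Finset.sum_range_succ' (fun p => Bc n a p * Gc n a (m + 1 - p)) (m+1)]
      rw [Finset.sum_range_succ (fun p => Bc n a (p+1) * Gc n a (m + 1 - (p+1))) m]
      have hrw : ∀ p, m + 1 - (p + 1) = m - p := fun p => by omega
      simp only [Nat.sub_self, Nat.succ_sub_succ, Nat.sub_zero, hrw,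
        show m + 1 + 1 = m + 2 from rfl, Bc_zero, Gc_zero, mul_one]
      rw [hG, hB, hKval, hBval]
      abel

lemma Gc_upper (hn : 2 ≤ n) (hd : ∀ i j : Fin N, i ≠ j → a 0 i j = 0)
    (hupper : ∀ q, q ≤ n - 1 → ∀ i j : Fin N, j < i → a q i j = 0) :
    ∀ m, m ≤ n - 1 → ∀ i j : Fin N, j < i → Gc n a m i j = 0 := by
  intro m
  induction m using Nat.strong_induction_on with
  | _ m IH =>
    intro hm i j hij
    cases m with
    | zero => rw [Gc_zero]; exact Matrix.one_apply_ne (Ne.symm (ne_of_lt hij))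
    | succ m =>
      have hGup : ∀ p, p ≤ m → ∀ i' j' : Fin N, j' < i' → Gc n a p i' j' = 0 := by
        intro p hp i' j' hij'
        exact IH p (by omega) (by omega) i' j' hij'
      rw [Gc, normP]
      simp only [solveP, Matrix.of_apply, if_neg (Ne.symm (ne_of_lt hij)).symm]
      rw [if_neg (Ne.symm (ne_of_lt hij))]
      have hK : (((∑ p : Fin (m+1), (normP n a p.1).1 * a (m + 1 - p.1))
          + ((m + 2 - n : ℕ) : ℂ) • (normP n a (min (m + 2 - n) m)).1
          - ∑ p : Fin m, (normP n a (p.1 + 1)).2 * (normP n a (m - p.1)).1)) i j = 0 := by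
        have h2 : m + 2 - n = 0 := by omega
        simp only [Matrix.sub_apply, Matrix.add_apply, Matrix.smul_apply, h2, Nat.cast_zero,
          zero_smul, add_zero, Matrix.sum_apply]
        have hS1 : ∀ p : Fin (m+1), ((normP n a p.1).1 * a (m + 1 - p.1)) i j = 0 := by
          intro p
          rw [Matrix.mul_apply]
          apply Finset.sum_eq_zero
          intro k _
          rcases lt_or_ge k i with hk | hk
          · rw [show (normP n a p.1).1 i k = Gc n a p.1 i k from rfl, hGup p.1 (by omega) i k hk,
              zero_mul]
          · rw [hupper (m + 1 - p.1) (by omega) k j (lt_of_lt_of_le hij hk), mul_zero]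
        have hS2 : ∀ p : Fin m, ((normP n a (p.1 + 1)).2 * (normP n a (m - p.1)).1) i j = 0 := by
          intro p
          rw [Matrix.mul_apply]
          apply Finset.sum_eq_zero
          intro k _
          rcases eq_or_ne i k with hk | hk
          · subst hk
            rw [show (normP n a (m - p.1)).1 i j = Gc n a (m - p.1) i j from rfl,
              hGup (m - p.1) (by omega) i j hij, mul_zero]
          · rw [show (normP n a (p.1 + 1)).2 i k = Bc n a (p.1 + 1) i k from rfl,
              Bc_diag (p.1 + 1) hk hd, zero_mul]
        rw [Finset.sum_eq_zero (fun p _ => hS1 p), Finset.sum_eq_zero (fun p _ => hS2 p)]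
        simp
      rw [hK, zero_div]

open PowerSeries

noncomputable def matPS (c : ℕ → Mx N) : Matrix (Fin N) (Fin N) ℂ⟦X⟧ :=
  Matrix.of fun i j => PowerSeries.mk fun m => c m i j

lemma matPS_apply (c : ℕ → Mx N) (i j : Fin N) :
    matPS c i j = PowerSeries.mk fun m => c m i j := rfl

lemma coeff_matPS_mul (c c' : ℕ → Mx N) (m : ℕ) (i j : Fin N) :
    (PowerSeries.coeff m) ((matPS c * matPS c') i j)
      = (∑ p ∈ Finset.range (m+1), c p * c' (m - p)) i j := by
  rw [Matrix.mul_apply, map_sum]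
  simp only [matPS_apply, PowerSeries.coeff_mul, PowerSeries.coeff_mk]
  rw [Finset.sum_comm]
  rw [Finset.Nat.sum_antidiagonal_eq_sum_range_succ_mk]
  simp only [Matrix.sum_apply, Matrix.mul_apply]

/-- entrywise derivative of a matrix of power series -/
noncomputable def matD (h : Matrix (Fin N) (Fin N) ℂ⟦X⟧) : Matrix (Fin N) (Fin N) ℂ⟦X⟧ :=
  Matrix.of fun i j => PowerSeries.derivativeFun (h i j)

lemma matD_apply (h : Matrix (Fin N) (Fin N) ℂ⟦X⟧) (i j : Fin N) :
    matD h i j = PowerSeries.derivativeFun (h i j) := rfl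

lemma matD_mul (P Q : Matrix (Fin N) (Fin N) ℂ⟦X⟧) :
    matD (P * Q) = matD P * Q + P * matD Q := by
  have hD : ∀ (f : Fin N → ℂ⟦X⟧), PowerSeries.derivativeFun (∑ l, f l)
      = ∑ l, PowerSeries.derivativeFun (f l) := fun f =>
    map_sum (PowerSeries.derivative ℂ).toLinearMap f Finset.univ
  ext i j
  simp only [matD_apply, Matrix.add_apply, Matrix.mul_apply]
  rw [hD]
  rw [← Finset.sum_add_distrib]
  congr 1
  apply Finset.sum_congr rfl
  intro l _
  rw [PowerSeries.derivativeFun_mul, smul_eq_mul, smul_eq_mul]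
  ring

noncomputable def ode (s : ℕ → ℂ) : ℕ → ℂ
  | 0 => 1
  | (m+1) => (-((m:ℂ)+1))⁻¹ * ∑ p : Fin (m+1), s p.1 * ode s (m - p.1)
  termination_by m => m
  decreasing_by omega

lemma ode_zero (s : ℕ → ℂ) : ode s 0 = 1 := by simp [ode]

lemma ode_vanish (s : ℕ → ℂ) (t : ℕ) (hs : ∀ p, p < t → s p = 0) :
    ∀ m, 1 ≤ m → m ≤ t → ode s m = 0 := by
  intro m hm1 hmt
  cases m with
  | zero => omega
  | succ m =>
    rw [ode]
    rw [Finset.sum_eq_zero (fun p _ => by rw [hs p.1 (by omega), zero_mul]), mul_zero]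

lemma ode_deriv (s : ℕ → ℂ) :
    PowerSeries.derivativeFun (PowerSeries.mk (ode s))
      = -(PowerSeries.mk s * PowerSeries.mk (ode s)) := by
  ext m
  rw [coeff_derivativeFun_aux, map_neg, PowerSeries.coeff_mul,
    Finset.Nat.sum_antidiagonal_eq_sum_range_succ_mk]
  simp only [PowerSeries.coeff_mk]
  rw [ode]
  rw [← Finset.sum_range fun p => s p * ode s (m - p)]
  set S := ∑ x ∈ Finset.range (m+1), s x * ode s (m - x) with hS
  have key : (-((m:ℂ)+1))⁻¹ * ((m:ℂ)+1) = -1 := by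
    rw [inv_neg, neg_mul, inv_mul_cancel₀ (Nat.cast_add_one_ne_zero m)]
  linear_combination S * key

/-- the D-term as a scalar multiple of the derivative -/
lemma DtEq (hn : 2 ≤ n) :
    matPS (fun m => ((m + 1 - n : ℕ) : ℂ) • Gc n a (m + 1 - n))
      = ((X : ℂ⟦X⟧)^n) • matD (matPS (Gc n a)) := by
  rw [← Matrix.ext_iff]
  intro i j
  apply PowerSeries.ext
  intro m
  have hR : (((X:ℂ⟦X⟧) ^ n) • matD (matPS (Gc n a))) i j
      = (X:ℂ⟦X⟧)^n * PowerSeries.derivativeFun (PowerSeries.mk fun m => Gc n a m i j) := rfl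
  rw [hR, matPS_apply, PowerSeries.coeff_mk, PowerSeries.coeff_X_pow_mul',
    Matrix.smul_apply, smul_eq_mul]
  split_ifs with h
  · rw [coeff_derivativeFun_aux, PowerSeries.coeff_mk]
    have h1 : m + 1 - n = m - n + 1 := by omega
    rw [h1, Nat.cast_add, Nat.cast_one]
    ring
  · have h1 : m + 1 - n = 0 := by omega
    rw [h1]
    simp

/-- Stage 1: the conjugation identity at the power series level. -/
lemma stage1 (hn : 2 ≤ n) (hd : ∀ i j : Fin N, i ≠ j → a 0 i j = 0)
    (hinj : ∀ i j : Fin N, a 0 i i = a 0 j j → i = j) :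
    matPS (Gc n a) * matPS a + ((X : ℂ⟦X⟧)^n) • matD (matPS (Gc n a))
      = matPS (Bc n a) * matPS (Gc n a) := by
  rw [← DtEq hn]
  rw [← Matrix.ext_iff]
  intro i j
  apply PowerSeries.ext
  intro m
  rw [Matrix.add_apply, map_add, coeff_matPS_mul, coeff_matPS_mul, matPS_apply,
    PowerSeries.coeff_mk]
  have := normE hn hd hinj m
  calc (∑ p ∈ Finset.range (m+1), Gc n a p * a (m - p)) i j
        + (((m + 1 - n : ℕ) : ℂ) • Gc n a (m + 1 - n)) i j
      = ((∑ p ∈ Finset.range (m+1), Gc n a p * a (m - p))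
        + ((m + 1 - n : ℕ) : ℂ) • Gc n a (m + 1 - n)) i j := by
        rw [Matrix.add_apply]
    _ = (∑ p ∈ Finset.range (m+1), Bc n a p * Gc n a (m - p)) i j := by rw [this]

/-- the diagonal tail coefficients -/
noncomputable def sfun (n : ℕ) (a : ℕ → Mx N) (i : Fin N) (m : ℕ) : ℂ :=
  if n - 1 ≤ m then Bc n a (m + n) i i else 0

noncomputable def uu (n : ℕ) (a : ℕ → Mx N) (i : Fin N) : ℕ → ℂ := ode (sfun n a i)

noncomputable def Uhat (n : ℕ) (a : ℕ → Mx N) : Matrix (Fin N) (Fin N) ℂ⟦X⟧ :=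
  Matrix.of fun i j => if i = j then PowerSeries.mk (uu n a i) else 0

/-- the truncated normal-form coefficients -/
noncomputable def BcT (n : ℕ) (a : ℕ → Mx N) (m : ℕ) : Mx N :=
  if m + 2 ≤ 2 * n then Bc n a m else 0

lemma tailEq (hn : 2 ≤ n) (i : Fin N) :
    (X : ℂ⟦X⟧)^n * PowerSeries.mk (sfun n a i)
      = PowerSeries.mk (fun m => Bc n a m i i) - PowerSeries.mk (fun m => BcT n a m i i) := by
  apply PowerSeries.ext
  intro m
  have hBcT : BcT n a m i i = if m + 2 ≤ 2*n then Bc n a m i i else 0 := by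
    rw [BcT]; split_ifs <;> rfl
  rw [PowerSeries.coeff_X_pow_mul', map_sub, PowerSeries.coeff_mk, PowerSeries.coeff_mk,
    PowerSeries.coeff_mk, hBcT]
  by_cases h1 : n ≤ m
  · rw [if_pos h1]
    by_cases h2 : 2*n - 1 ≤ m
    · simp only [sfun]
      rw [if_pos (show n - 1 ≤ m - n by omega), Nat.sub_add_cancel h1,
        if_neg (show ¬ (m + 2 ≤ 2*n) by omega), sub_zero]
    · simp only [sfun]
      rw [if_neg (show ¬ (n - 1 ≤ m - n) by omega), if_pos (show m + 2 ≤ 2*n by omega), sub_self]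
  · rw [if_neg h1, if_pos (show m + 2 ≤ 2*n by omega), sub_self]

/-- Stage 2: killing the diagonal tail. -/
lemma stage2 (hn : 2 ≤ n) (hd : ∀ i j : Fin N, i ≠ j → a 0 i j = 0) :
    Uhat n a * matPS (Bc n a) + ((X : ℂ⟦X⟧)^n) • matD (Uhat n a)
      = matPS (BcT n a) * Uhat n a := by
  rw [← Matrix.ext_iff]
  intro i j
  have hUB : (Uhat n a * matPS (Bc n a)) i j
      = PowerSeries.mk (uu n a i) * matPS (Bc n a) i j := by
    rw [Matrix.mul_apply]
    rw [Finset.sum_eq_single i]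
    · rw [Uhat, Matrix.of_apply, if_pos rfl]
    · intro b _ hb; rw [Uhat, Matrix.of_apply, if_neg (Ne.symm hb), zero_mul]
    · intro h; exact absurd (Finset.mem_univ i) h
  have hBU : (matPS (BcT n a) * Uhat n a) i j
      = matPS (BcT n a) i j * PowerSeries.mk (uu n a j) := by
    rw [Matrix.mul_apply]
    rw [Finset.sum_eq_single j]
    · rw [Uhat, Matrix.of_apply, if_pos rfl]
    · intro b _ hb; rw [Uhat, Matrix.of_apply, if_neg hb, mul_zero]
    · intro h; exact absurd (Finset.mem_univ j) h
  rw [Matrix.add_apply, hUB, hBU, Matrix.smul_apply, matD_apply, smul_eq_mul]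
  by_cases hij : i = j
  · subst hij
    have hU : Uhat n a i i = PowerSeries.mk (uu n a i) := by
      rw [Uhat, Matrix.of_apply, if_pos rfl]
    rw [hU, matPS_apply, matPS_apply]
    rw [show PowerSeries.derivativeFun (PowerSeries.mk (uu n a i))
        = -(PowerSeries.mk (sfun n a i) * PowerSeries.mk (uu n a i)) from ode_deriv _]
    have ht := tailEq (a := a) hn i
    calc PowerSeries.mk (uu n a i) * (PowerSeries.mk fun m => Bc n a m i i)
          + (X:ℂ⟦X⟧)^n * -(PowerSeries.mk (sfun n a i) * PowerSeries.mk (uu n a i))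
        = PowerSeries.mk (uu n a i) * (PowerSeries.mk fun m => Bc n a m i i)
          - ((X:ℂ⟦X⟧)^n * PowerSeries.mk (sfun n a i)) * PowerSeries.mk (uu n a i) := by
          ring
      _ = (PowerSeries.mk fun m => BcT n a m i i) * PowerSeries.mk (uu n a i) := by
          rw [ht]
          ring
  · have hU : Uhat n a i j = 0 := by rw [Uhat, Matrix.of_apply, if_neg hij]
    have hB1 : matPS (Bc n a) i j = 0 := by
      apply PowerSeries.ext
      intro m
      rw [matPS_apply, PowerSeries.coeff_mk, Bc_diag m hij hd, map_zero]
    have hB2 : matPS (BcT n a) i j = 0 := by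
      apply PowerSeries.ext
      intro m
      rw [matPS_apply, PowerSeries.coeff_mk, map_zero]
      unfold BcT
      split_ifs
      · exact Bc_diag m hij hd
      · rfl
    have hd0 : PowerSeries.derivativeFun (0 : ℂ⟦X⟧) = 0 :=
      map_zero (PowerSeries.derivative ℂ).toLinearMap
    rw [hB1, hB2, hU, hd0]
    simp

/-- the composed gauge at power series level -/
noncomputable def ghat (n : ℕ) (a : ℕ → Mx N) : Matrix (Fin N) (Fin N) ℂ⟦X⟧ :=
  Uhat n a * matPS (Gc n a)

/-- The full power-series-level gauge identity. -/
lemma star (hn : 2 ≤ n) (hd : ∀ i j : Fin N, i ≠ j → a 0 i j = 0)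
    (hinj : ∀ i j : Fin N, a 0 i i = a 0 j j → i = j) :
    ghat n a * matPS a + ((X : ℂ⟦X⟧)^n) • matD (ghat n a)
      = matPS (BcT n a) * ghat n a := by
  rw [ghat, matD_mul]
  calc Uhat n a * matPS (Gc n a) * matPS a
        + (X:ℂ⟦X⟧)^n • (matD (Uhat n a) * matPS (Gc n a) + Uhat n a * matD (matPS (Gc n a)))
      = Uhat n a * (matPS (Gc n a) * matPS a + (X:ℂ⟦X⟧)^n • matD (matPS (Gc n a)))
        + ((X:ℂ⟦X⟧)^n • matD (Uhat n a)) * matPS (Gc n a) := by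
        rw [smul_add, Matrix.mul_add, Matrix.mul_smul, Matrix.smul_mul, Matrix.mul_assoc]
        abel
    _ = Uhat n a * (matPS (Bc n a) * matPS (Gc n a))
        + ((X:ℂ⟦X⟧)^n • matD (Uhat n a)) * matPS (Gc n a) := by
        rw [stage1 hn hd hinj]
    _ = (Uhat n a * matPS (Bc n a) + (X:ℂ⟦X⟧)^n • matD (Uhat n a)) * matPS (Gc n a) := by
        rw [Matrix.add_mul, Matrix.mul_assoc]
    _ = matPS (BcT n a) * (Uhat n a * matPS (Gc n a)) := by
        rw [stage2 hn hd, Matrix.mul_assoc]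

lemma uu_zero (i : Fin N) : uu n a i 0 = 1 := ode_zero _

lemma uu_vanish (hn : 2 ≤ n) (i : Fin N) (m : ℕ) (h1 : 1 ≤ m) (h2 : m ≤ n - 1) :
    uu n a i m = 0 := by
  apply ode_vanish _ (n-1) _ m h1 h2
  intro p hp
  rw [sfun, if_neg (by omega)]

lemma ghat_coeff_lt (hn : 2 ≤ n) (i j : Fin N) (m : ℕ) (hm : m < n) :
    (PowerSeries.coeff m) (ghat n a i j) = Gc n a m i j := by
  have hg : ghat n a i j = PowerSeries.mk (uu n a i) * matPS (Gc n a) i j := by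
    rw [ghat, Matrix.mul_apply]
    rw [Finset.sum_eq_single i]
    · rw [Uhat, Matrix.of_apply, if_pos rfl]
    · intro b _ hb; rw [Uhat, Matrix.of_apply, if_neg (Ne.symm hb), zero_mul]
    · intro h; exact absurd (Finset.mem_univ i) h
  rw [hg, PowerSeries.coeff_mul, Finset.Nat.sum_antidiagonal_eq_sum_range_succ_mk]
  simp only [PowerSeries.coeff_mk, matPS_apply]
  rw [Finset.sum_eq_single 0]
  · rw [uu_zero, one_mul, Nat.sub_zero]
  · intro b hb hb0
    rw [uu_vanish hn i b (by omega) (by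
      simp only [Finset.mem_range] at hb
      omega), zero_mul]
  · intro h; exact absurd (Finset.mem_range.2 (by omega)) h

end NormalForm

section Bridge

open HahnSeries PowerSeries

lemma ofPS_coeff_neg (f : ℂ⟦X⟧) {k : ℤ} (hk : k < 0) :
    ((ofPowerSeries ℤ ℂ) f).coeff k = 0 := by
  rw [HahnSeries.ofPowerSeries_apply]
  apply HahnSeries.embDomain_notin_range
  rintro ⟨m, hm⟩
  have : ((m : ℕ) : ℤ) = k := hm
  omega

lemma ofPS_coeff_nonneg (f : ℂ⟦X⟧) {k : ℤ} (hk : 0 ≤ k) :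
    ((ofPowerSeries ℤ ℂ) f).coeff k = PowerSeries.coeff k.toNat f := by
  have h := HahnSeries.ofPowerSeries_apply_coeff (Γ := ℤ) f k.toNat
  rw [show ((k.toNat : ℕ) : ℤ) = k by omega] at h
  exact h

lemma single_neg_mul_coeff (n : ℕ) (f : LaurentSeries ℂ) (k : ℤ) :
    ((HahnSeries.single (-(n:ℤ)) (1:ℂ)) * f).coeff k = f.coeff (k + n) := by
  have := HahnSeries.coeff_single_mul_add (r := (1:ℂ)) (x := f) (a := k + (n:ℤ)) (b := -(n:ℤ))
  simpa using this

lemma laurentDeriv_coeff (f : LaurentSeries ℂ) (k : ℤ) :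
    (laurentDeriv f).coeff k = ((k + 1 : ℤ) : ℂ) * f.coeff (k + 1) := rfl

/-- key bridge: derivative commutes with the embedding, with the `z^{-n} · z^n` twist. -/
lemma lderiv_bridge (n : ℕ) (hn : 2 ≤ n) (f : ℂ⟦X⟧) :
    laurentDeriv ((ofPowerSeries ℤ ℂ) f)
      = (HahnSeries.single (-(n:ℤ)) (1:ℂ))
        * (ofPowerSeries ℤ ℂ) ((X : ℂ⟦X⟧)^n * PowerSeries.derivativeFun f) := by
  apply HahnSeries.coeff_inj.mp
  funext k
  rw [laurentDeriv_coeff, single_neg_mul_coeff]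
  rcases lt_or_ge (k + (n:ℤ)) 0 with h | h
  · rw [ofPS_coeff_neg _ h, ofPS_coeff_neg _ (by omega), mul_zero]
  · rw [ofPS_coeff_nonneg _ h, PowerSeries.coeff_X_pow_mul']
    rcases lt_or_ge k 0 with hk | hk
    · rcases eq_or_lt_of_le hk.le with hk1 | hk1
      all_goals rcases lt_or_ge k (-1) with hk2 | hk2
      · rw [if_neg (by omega), ofPS_coeff_neg _ (by omega), mul_zero]
      · have hkm : k = -1 := by omega
        subst hkm
        rw [if_neg (by omega)]
        norm_num
      · rw [if_neg (by omega), ofPS_coeff_neg _ (by omega), mul_zero]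
      · have hkm : k = -1 := by omega
        subst hkm
        rw [if_neg (by omega)]
        norm_num
    · rw [if_pos (by omega), coeff_derivativeFun_aux,
        ofPS_coeff_nonneg _ (by omega)]
      have h1 : (k + (n:ℤ)).toNat - n = k.toNat := by omega
      have h2 : (k + 1).toNat = k.toNat + 1 := by omega
      rw [h1, h2]
      have h3 : ((k + 1 : ℤ) : ℂ) = ((k.toNat : ℕ) : ℂ) + 1 := by
        rw [show (k + 1 : ℤ) = ((k.toNat : ℕ) : ℤ) + 1 by omega]
        push_cast
        ring
      rw [h3, mul_comm]

lemma matLS_mul_smul {N : ℕ} (c : LaurentSeries ℂ) (M P : Matrix (Fin N) (Fin N) (LaurentSeries ℂ)) :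
    M * (c • P) = c • (M * P) := Matrix.mul_smul M c P

lemma matLS_smul_add {N : ℕ} (c : LaurentSeries ℂ) (M P : Matrix (Fin N) (Fin N) (LaurentSeries ℂ)) :
    c • M + c • P = c • (M + P) := (smul_add c M P).symm

lemma matLS_smul_mul {N : ℕ} (c : LaurentSeries ℂ) (M P : Matrix (Fin N) (Fin N) (LaurentSeries ℂ)) :
    (c • M) * P = c • (M * P) := Matrix.smul_mul c M P

end Bridge

/-- Existence of the formal normal form: if `A(z) = Σ_{j≥−n} A_j z^j` is a matrix
Laurent series whose polar coefficients `A_{−n}, …, A_{−1}` are upper triangular, and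
whose leading coefficient `A_{−n}` is diagonal with pairwise distinct diagonal entries,
then there is `g ∈ GL_N(ℂ[[z]])` (entries are power series, constant term invertible),
unipotent upper triangular modulo `z^n`, such that the gauge transform
`g⋆A = g·A·g⁻¹ + g′·g⁻¹` equals `Σ_{j=1}^n α_j z^{−j} + Σ_{j=0}^{n−2} β_j z^j` with all
coefficients `α_j`, `β_j` diagonal. -/
theorem stmt_10 (N n : ℕ) (hN : 1 ≤ N) (hn : 2 ≤ n)
    (A : Matrix (Fin N) (Fin N) (LaurentSeries ℂ))
    (hA_pole : ∀ k : ℤ, k < -(n : ℤ) → ∀ i j : Fin N, (A i j).coeff k = 0)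
    (hA_upper : ∀ k : ℤ, -(n : ℤ) ≤ k → k ≤ -1 →
      ∀ i j : Fin N, j < i → (A i j).coeff k = 0)
    (hA_lead_diag : (Matrix.of fun i j : Fin N => (A i j).coeff (-(n : ℤ))).IsDiag)
    (hA_lead_distinct : Function.Injective fun i : Fin N => (A i i).coeff (-(n : ℤ))) :
    ∃ g : Matrix (Fin N) (Fin N) (LaurentSeries ℂ),
      -- entries of `g` are formal power series
      (∀ i j : Fin N, ∀ k : ℤ, k < 0 → (g i j).coeff k = 0) ∧
      -- the constant term `g(0)` is invertible, i.e. `g ∈ GL_N(ℂ[[z]])`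
      IsUnit (Matrix.of fun i j : Fin N => (g i j).coeff 0) ∧
      -- `g` is unipotent upper triangular modulo `z^n`
      (∀ i j : Fin N, j < i → ∀ k : ℤ, k < (n : ℤ) → (g i j).coeff k = 0) ∧
      (∀ i : Fin N, (g i i).coeff 0 = 1 ∧
        ∀ k : ℤ, 0 < k → k < (n : ℤ) → (g i i).coeff k = 0) ∧
      -- the gauge transform is in normal form
      (∀ k : ℤ, (Matrix.of fun i j : Fin N =>
          ((g * A * g⁻¹ + matrixLaurentDeriv g * g⁻¹) i j).coeff k).IsDiag) ∧
      (∀ k : ℤ, k < -(n : ℤ) → ∀ i j : Fin N,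
        ((g * A * g⁻¹ + matrixLaurentDeriv g * g⁻¹) i j).coeff k = 0) ∧
      (∀ k : ℤ, (n : ℤ) - 1 ≤ k → ∀ i j : Fin N,
        ((g * A * g⁻¹ + matrixLaurentDeriv g * g⁻¹) i j).coeff k = 0) := by
  classical
  set a : ℕ → NormalForm.Mx N := fun m => Matrix.of fun i j => (A i j).coeff ((m:ℤ) - n)
    with ha
  have haval : ∀ m : ℕ, ∀ i j : Fin N, a m i j = (A i j).coeff ((m:ℤ) - n) :=
    fun m i j => rfl
  have hd : ∀ i j : Fin N, i ≠ j → a 0 i j = 0 := by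
    intro i j hij
    rw [haval]
    have := @hA_lead_diag i j hij
    simpa using this
  have hinj : ∀ i j : Fin N, a 0 i i = a 0 j j → i = j := by
    intro i j hij
    rw [haval, haval] at hij
    apply hA_lead_distinct
    simpa using hij
  have hupper : ∀ q, q ≤ n - 1 → ∀ i j : Fin N, j < i → a q i j = 0 := by
    intro q hq i j hij
    rw [haval]
    exact hA_upper ((q:ℤ) - n) (by omega) (by omega) i j hij
  set φ : PowerSeries ℂ →+* LaurentSeries ℂ := HahnSeries.ofPowerSeries ℤ ℂ with hφ
  set Φ : Matrix (Fin N) (Fin N) (PowerSeries ℂ) →+* Matrix (Fin N) (Fin N) (LaurentSeries ℂ) :=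
    RingHom.mapMatrix φ with hΦ
  set gh : Matrix (Fin N) (Fin N) (PowerSeries ℂ) := NormalForm.ghat n a with hgh
  set g : Matrix (Fin N) (Fin N) (LaurentSeries ℂ) := Φ gh with hg
  set c : LaurentSeries ℂ := HahnSeries.single (-(n:ℤ)) (1:ℂ) with hc
  set B : Matrix (Fin N) (Fin N) (LaurentSeries ℂ) :=
    c • Φ (NormalForm.matPS (NormalForm.BcT n a)) with hB
  have hgentry : ∀ i j : Fin N, g i j = φ (gh i j) := fun i j => rfl
  -- A as a twisted power series matrix
  have hA : A = c • Φ (NormalForm.matPS a) := by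
    rw [← Matrix.ext_iff]
    intro i j
    apply HahnSeries.coeff_inj.mp
    funext k
    have hentry : (c • Φ (NormalForm.matPS a)) i j
        = c * φ (PowerSeries.mk fun m => a m i j) := rfl
    rw [hentry, hc, single_neg_mul_coeff]
    rcases lt_or_ge (k + (n:ℤ)) 0 with h | h
    · rw [ofPS_coeff_neg _ h, hA_pole k (by omega) i j]
    · rw [ofPS_coeff_nonneg _ h, PowerSeries.coeff_mk, haval]
      congr 1
      omega
  -- the derivative as a twisted power series matrix
  have hDg : matrixLaurentDeriv g
      = c • Φ (((PowerSeries.X : PowerSeries ℂ)^n) • NormalForm.matD gh) := by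
    rw [← Matrix.ext_iff]
    intro i j
    have h1 : matrixLaurentDeriv g i j = laurentDeriv (φ (gh i j)) := rfl
    have h2 : (c • Φ (((PowerSeries.X : PowerSeries ℂ)^n) • NormalForm.matD gh)) i j
        = c * φ ((PowerSeries.X : PowerSeries ℂ)^n
            * PowerSeries.derivativeFun (gh i j)) := rfl
    rw [h1, h2, hc]
    exact lderiv_bridge n hn (gh i j)
  have hstar := NormalForm.star (n := n) (a := a) hn hd hinj
  -- the fundamental gauge identity
  have hgA : g * A + matrixLaurentDeriv g = B * g := by
    calc g * A + matrixLaurentDeriv g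
        = Φ gh * (c • Φ (NormalForm.matPS a))
          + c • Φ (((PowerSeries.X : PowerSeries ℂ)^n) • NormalForm.matD gh) := by
          rw [← hA, ← hDg, hg]
      _ = c • (Φ gh * Φ (NormalForm.matPS a))
          + c • Φ (((PowerSeries.X : PowerSeries ℂ)^n) • NormalForm.matD gh) := by
          rw [matLS_mul_smul]
      _ = c • Φ (NormalForm.ghat n a * NormalForm.matPS a
          + ((PowerSeries.X : PowerSeries ℂ)^n) • NormalForm.matD gh) := by
          rw [← map_mul, matLS_smul_add, ← map_add, hgh]
      _ = c • Φ (NormalForm.matPS (NormalForm.BcT n a) * NormalForm.ghat n a) := by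
          rw [hgh, hstar]
      _ = (c • Φ (NormalForm.matPS (NormalForm.BcT n a))) * Φ gh := by
          rw [map_mul, matLS_smul_mul, hgh]
      _ = B * g := by rw [hB, hg]
  -- invertibility of g
  have h0 : (RingHom.mapMatrix (PowerSeries.constantCoeff)) gh = 1 := by
    rw [← Matrix.ext_iff]
    intro i j
    have h1 : (RingHom.mapMatrix (PowerSeries.constantCoeff)) gh i j
        = PowerSeries.coeff 0 (gh i j) := by
      rw [RingHom.mapMatrix_apply, Matrix.map_apply, PowerSeries.coeff_zero_eq_constantCoeff]
    rw [h1, hgh, NormalForm.ghat_coeff_lt hn i j 0 (by omega), NormalForm.Gc_zero]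
  have hdet1 : PowerSeries.constantCoeff gh.det = 1 := by
    rw [RingHom.map_det (PowerSeries.constantCoeff) gh, h0, Matrix.det_one]
  have hdet_ne : gh.det ≠ 0 := by
    intro h
    rw [h, map_zero] at hdet1
    exact zero_ne_one hdet1
  have hgdet : g.det = φ gh.det := by
    rw [hg, hΦ, ← RingHom.map_det]
  have hgdet_ne : g.det ≠ 0 := by
    rw [hgdet]
    intro h
    apply hdet_ne
    apply HahnSeries.ofPowerSeries_injective (Γ := ℤ) (R := ℂ)
    rw [show (HahnSeries.ofPowerSeries ℤ ℂ) gh.det = φ gh.det from rfl, h, map_zero]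
  have hdetU : IsUnit g.det := isUnit_iff_ne_zero.mpr hgdet_ne
  have hginv : g * g⁻¹ = 1 := Matrix.mul_nonsing_inv g hdetU
  have hfinal : g * A * g⁻¹ + matrixLaurentDeriv g * g⁻¹ = B := by
    rw [← Matrix.add_mul, hgA, Matrix.mul_assoc, hginv, Matrix.mul_one]
  -- coefficients of g
  have hgcoeff : ∀ i j : Fin N, ∀ k : ℤ, 0 ≤ k → k < (n:ℤ) →
      (g i j).coeff k = NormalForm.Gc n a k.toNat i j := by
    intro i j k h0k hkn
    rw [hgentry, hφ, ofPS_coeff_nonneg _ h0k, hgh,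
      NormalForm.ghat_coeff_lt hn i j k.toNat (by omega)]
  have hBentry : ∀ i j : Fin N, ∀ k : ℤ,
      (B i j).coeff k = (φ (PowerSeries.mk fun m => NormalForm.BcT n a m i j)).coeff
        (k + n) := by
    intro i j k
    have hentry : B i j = c * φ (PowerSeries.mk fun m => NormalForm.BcT n a m i j) := rfl
    rw [hentry, hc, single_neg_mul_coeff]
  refine ⟨g, ?_, ?_, ?_, ?_, ?_, ?_, ?_⟩
  · intro i j k hk
    rw [hgentry, hφ]
    exact ofPS_coeff_neg _ hk
  · have h1 : (Matrix.of fun i j : Fin N => (g i j).coeff 0) = 1 := by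
      rw [← Matrix.ext_iff]
      intro i j
      rw [Matrix.of_apply, hgcoeff i j 0 le_rfl (by omega), Int.toNat_zero,
        NormalForm.Gc_zero]
    rw [h1]
    exact isUnit_one
  · intro i j hij k hk
    rcases lt_or_ge k 0 with h | h
    · rw [hgentry, hφ]
      exact ofPS_coeff_neg _ h
    · rw [hgcoeff i j k h hk]
      exact NormalForm.Gc_upper hn hd hupper k.toNat (by omega) i j hij
  · intro i
    constructor
    · rw [hgcoeff i i 0 le_rfl (by omega), Int.toNat_zero, NormalForm.Gc_zero]
      exact Matrix.one_apply_eq i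
    · intro k hk0 hkn
      rw [hgcoeff i i k (by omega) hkn]
      exact NormalForm.Gc_diag k.toNat i (by omega)
  · intro k
    intro i j hij
    rw [Matrix.of_apply, hfinal, hBentry]
    rcases lt_or_ge (k + (n:ℤ)) 0 with h | h
    · rw [hφ]; exact ofPS_coeff_neg _ h
    · rw [hφ, ofPS_coeff_nonneg _ h, PowerSeries.coeff_mk]
      rw [NormalForm.BcT]
      split_ifs
      · exact NormalForm.Bc_diag _ hij hd
      · rfl
  · intro k hk i j
    rw [hfinal, hBentry, hφ]
    exact ofPS_coeff_neg _ (by omega)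
  · intro k hk i j
    rw [hfinal, hBentry, hφ, ofPS_coeff_nonneg _ (by omega), PowerSeries.coeff_mk,
      NormalForm.BcT, if_neg (by omega)]
    rfl
end

section
/- Let N ≥ 1 and n ≥ 2. Let B(z) = Σ_{j=−n}^{n−2} B_j z^j and C(z) = Σ_{j=−n}^{n−2} C_j z^j be formal Laurent series with coefficients in M_N(ℂ) such that all B_j and C_j are diagonal matrices and B_{−n} has pairwise distinct diagonal entries. Suppose there exists g ∈ GL_N(ℂ[[z]]) whose reduction modulo z^n is unipotent upper triangular (upper triangular with all diagonal entries 1 as a matrix over ℂ[z]/(z^n)) such that g·B·g⁻¹ + g′·g⁻¹ = C. Then B = C (i.e. B_j = C_j for all j). -/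
open HahnSeries Finset in
lemma coeff_sum_aux {α : Type*} (s : Finset α) (f : α → LaurentSeries ℂ) (m : ℤ) :
    (∑ l ∈ s, f l).coeff m = ∑ l ∈ s, (f l).coeff m :=
  map_sum (HahnSeries.coeff.addMonoidHom m) _ _

open HahnSeries Finset in
lemma mul_coeff_Icc (n : ℕ) (f h : LaurentSeries ℂ)
    (hh : ∀ k : ℤ, (k < -(n : ℤ) ∨ (n : ℤ) - 1 ≤ k) → h.coeff k = 0) (m : ℤ) :
    (f * h).coeff m
      = ∑ l ∈ Finset.Icc (-(n : ℤ)) ((n : ℤ) - 2), f.coeff (m - l) * h.coeff l := by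
  have hrep : h = ∑ l ∈ Finset.Icc (-(n : ℤ)) ((n : ℤ) - 2),
      HahnSeries.single l (h.coeff l) := by
    ext k
    rw [coeff_sum_aux (Finset.Icc (-(n : ℤ)) ((n : ℤ) - 2))
      (fun l => HahnSeries.single l (h.coeff l)) k]
    by_cases hk : k ∈ Finset.Icc (-(n : ℤ)) ((n : ℤ) - 2)
    · rw [Finset.sum_eq_single_of_mem k hk
        (fun l _ hne => HahnSeries.coeff_single_of_ne (Ne.symm hne)), HahnSeries.coeff_single_same]
    · rw [Finset.sum_eq_zero
        (fun l hl => HahnSeries.coeff_single_of_ne (by rintro rfl; exact hk hl))]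
      apply hh
      simp only [Finset.mem_Icc, not_and_or, not_le] at hk
      omega
  calc (f * h).coeff m
      = (f * ∑ l ∈ Finset.Icc (-(n : ℤ)) ((n : ℤ) - 2),
          HahnSeries.single l (h.coeff l)).coeff m := by rw [← hrep]
    _ = ∑ l ∈ Finset.Icc (-(n : ℤ)) ((n : ℤ) - 2),
          (f * HahnSeries.single l (h.coeff l)).coeff m := by
        rw [Finset.mul_sum, coeff_sum_aux]
    _ = ∑ l ∈ Finset.Icc (-(n : ℤ)) ((n : ℤ) - 2), f.coeff (m - l) * h.coeff l := by
        refine Finset.sum_congr rfl fun l _ => ?_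
        have h1 : (f * HahnSeries.single l (h.coeff l)).coeff (m - l + l)
            = f.coeff (m - l) * h.coeff l := HahnSeries.coeff_mul_single_add
        rwa [show m - l + l = m from by ring] at h1

/-- Uniqueness of the formal normal form: if `B = Σ_{j=−n}^{n−2} B_j z^j` and
`C = Σ_{j=−n}^{n−2} C_j z^j` are matrix Laurent series with all coefficients diagonal,
`B_{−n}` has pairwise distinct diagonal entries, and some `g ∈ GL_N(ℂ[[z]])` which is
unipotent upper triangular modulo `z^n` satisfies `g·B·g⁻¹ + g′·g⁻¹ = C`, then
`B = C`. -/
theorem stmt_11 (N n : ℕ) (hN : 1 ≤ N) (hn : 2 ≤ n)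
    (B C : Matrix (Fin N) (Fin N) (LaurentSeries ℂ))
    (hB_supp : ∀ k : ℤ, (k < -(n : ℤ) ∨ (n : ℤ) - 1 ≤ k) →
      ∀ i j : Fin N, (B i j).coeff k = 0)
    (hC_supp : ∀ k : ℤ, (k < -(n : ℤ) ∨ (n : ℤ) - 1 ≤ k) →
      ∀ i j : Fin N, (C i j).coeff k = 0)
    (hB_diag : ∀ k : ℤ, (Matrix.of fun i j : Fin N => (B i j).coeff k).IsDiag)
    (hC_diag : ∀ k : ℤ, (Matrix.of fun i j : Fin N => (C i j).coeff k).IsDiag)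
    (hB_lead_distinct : Function.Injective fun i : Fin N => (B i i).coeff (-(n : ℤ)))
    (hg : ∃ g : Matrix (Fin N) (Fin N) (LaurentSeries ℂ),
      -- entries of `g` are formal power series
      (∀ i j : Fin N, ∀ k : ℤ, k < 0 → (g i j).coeff k = 0) ∧
      -- the constant term `g(0)` is invertible, i.e. `g ∈ GL_N(ℂ[[z]])`
      IsUnit (Matrix.of fun i j : Fin N => (g i j).coeff 0) ∧
      -- `g` is unipotent upper triangular modulo `z^n`
      (∀ i j : Fin N, j < i → ∀ k : ℤ, k < (n : ℤ) → (g i j).coeff k = 0) ∧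
      (∀ i : Fin N, (g i i).coeff 0 = 1 ∧
        ∀ k : ℤ, 0 < k → k < (n : ℤ) → (g i i).coeff k = 0) ∧
      g * B * g⁻¹ + matrixLaurentDeriv g * g⁻¹ = C) :
    B = C := by
  classical
  obtain ⟨g, hpow, hunit, hlow, hudiag, heq⟩ := hg
  -- off-diagonal entries of B and C vanish identically
  have hBoff : ∀ p q : Fin N, p ≠ q → B p q = 0 := by
    intro p q hpq
    ext k
    simpa using hB_diag k hpq
  have hCoff : ∀ p q : Fin N, p ≠ q → C p q = 0 := by
    intro p q hpq
    ext k
    simpa using hC_diag k hpq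
  -- the determinant of g is a unit
  have hdet : IsUnit (Matrix.det g) := by
    rw [isUnit_iff_ne_zero]
    set p : Matrix (Fin N) (Fin N) (PowerSeries ℂ) :=
      Matrix.of fun i j => PowerSeries.mk fun k => (g i j).coeff k with hp
    have hgp : ∀ i j : Fin N, (HahnSeries.ofPowerSeries ℤ ℂ) (p i j) = g i j := by
      intro i j
      ext k
      rw [show ((HahnSeries.ofPowerSeries ℤ ℂ) (p i j)) = ((p i j : PowerSeries ℂ) : LaurentSeries ℂ) from rfl,
        PowerSeries.coeff_coe]
      split_ifs with hk
      · exact (hpow i j k hk).symm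
      · simp only [hp, Matrix.of_apply, PowerSeries.coeff_mk]
        congr 1
        omega
    have h1 : g = (HahnSeries.ofPowerSeries ℤ ℂ).mapMatrix p :=
      Matrix.ext fun i j => (hgp i j).symm
    rw [h1, ← RingHom.map_det]
    intro hcontra
    have hp0 : p.det = 0 :=
      HahnSeries.ofPowerSeries_injective (by rw [hcontra, map_zero])
    have h2 := (PowerSeries.constantCoeff (R := ℂ)).map_det p
    rw [hp0, map_zero] at h2
    have h3 : (PowerSeries.constantCoeff (R := ℂ)).mapMatrix p
        = Matrix.of fun i j : Fin N => (g i j).coeff 0 := by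
      ext i j
      simp [hp, PowerSeries.constantCoeff_mk]
    rw [RingHom.mapMatrix_apply] at h2
    rw [RingHom.mapMatrix_apply] at h3
    rw [h3] at h2
    have h4 := (Matrix.isUnit_iff_isUnit_det _).mp hunit
    rw [← h2] at h4
    exact (not_isUnit_zero h4).elim
  -- multiply the gauge relation on the right by g
  have heq2 : g * B + matrixLaurentDeriv g = C * g := by
    have h := congrArg (fun M => M * g) heq
    simp only [add_mul] at h
    rwa [Matrix.nonsing_inv_mul_cancel_right _ _ hdet,
      Matrix.nonsing_inv_mul_cancel_right _ _ hdet] at h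
  -- the scalar coefficient equations
  have E : ∀ (i j : Fin N) (m : ℤ),
      (∑ l ∈ Finset.Icc (-(n : ℤ)) ((n : ℤ) - 2),
          (g i j).coeff (m - l) * (B j j).coeff l)
        + ((m + 1 : ℤ) : ℂ) * (g i j).coeff (m + 1)
      = ∑ l ∈ Finset.Icc (-(n : ℤ)) ((n : ℤ) - 2),
          (g i j).coeff (m - l) * (C i i).coeff l := by
    intro i j m
    have h0 : ((g * B + matrixLaurentDeriv g) i j).coeff m = ((C * g) i j).coeff m := by
      rw [heq2]
    rw [Matrix.add_apply, HahnSeries.coeff_add] at h0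
    have hL : ((g * B) i j).coeff m
        = ∑ l ∈ Finset.Icc (-(n : ℤ)) ((n : ℤ) - 2),
            (g i j).coeff (m - l) * (B j j).coeff l := by
      rw [Matrix.mul_apply, coeff_sum_aux,
        Finset.sum_eq_single_of_mem j (Finset.mem_univ j)
          (fun p _ hpj => by rw [hBoff p j hpj, mul_zero, HahnSeries.coeff_zero])]
      exact mul_coeff_Icc n _ _ (fun k hk => hB_supp k hk j j) m
    have hR : ((C * g) i j).coeff m
        = ∑ l ∈ Finset.Icc (-(n : ℤ)) ((n : ℤ) - 2),
            (g i j).coeff (m - l) * (C i i).coeff l := by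
      rw [Matrix.mul_apply, coeff_sum_aux,
        Finset.sum_eq_single_of_mem i (Finset.mem_univ i)
          (fun p _ hpi => by rw [hCoff i p (Ne.symm hpi), zero_mul, HahnSeries.coeff_zero])]
      rw [mul_comm]
      exact mul_coeff_Icc n _ _ (fun k hk => hC_supp k hk i i) m
    have hD : ((matrixLaurentDeriv g) i j).coeff m
        = ((m + 1 : ℤ) : ℂ) * (g i j).coeff (m + 1) := rfl
    rw [hL, hD] at h0
    rw [← hR]
    exact h0
  have E' : ∀ (i j : Fin N) (m : ℤ),
      (∑ l ∈ Finset.Icc (-(n : ℤ)) ((n : ℤ) - 2),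
          (g i j).coeff (m - l) * ((B j j).coeff l - (C i i).coeff l))
        + ((m + 1 : ℤ) : ℂ) * (g i j).coeff (m + 1) = 0 := by
    intro i j m
    have h := E i j m
    simp only [mul_sub, Finset.sum_sub_distrib]
    linear_combination h
  -- the key induction
  have key : ∀ r : ℕ,
      (∀ i : Fin N, (B i i).coeff (-(n : ℤ) + r) = (C i i).coeff (-(n : ℤ) + r)) ∧
      (∀ i j : Fin N, i ≠ j → (g i j).coeff (r : ℤ) = 0) := by
    intro r
    induction r using Nat.strong_induction_on with
    | _ r IH =>
    have part1 : ∀ i : Fin N,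
        (B i i).coeff (-(n : ℤ) + r) = (C i i).coeff (-(n : ℤ) + r) := by
      intro i
      by_cases hcase : (n : ℤ) - 1 ≤ -(n : ℤ) + r
      · rw [hB_supp _ (Or.inr hcase) i i, hC_supp _ (Or.inr hcase) i i]
      · push_neg at hcase
        set m : ℤ := -(n : ℤ) + r with hm
        have hE := E' i i m
        have hmem : m ∈ Finset.Icc (-(n : ℤ)) ((n : ℤ) - 2) := by
          rw [Finset.mem_Icc]
          omega
        have hsum : (∑ l ∈ Finset.Icc (-(n : ℤ)) ((n : ℤ) - 2),
            (g i i).coeff (m - l) * ((B i i).coeff l - (C i i).coeff l))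
            = (B i i).coeff m - (C i i).coeff m := by
          rw [Finset.sum_eq_single_of_mem m hmem ?_]
          · rw [show m - m = 0 from by ring, (hudiag i).1, one_mul]
          · intro l hl hne
            rw [Finset.mem_Icc] at hl
            rcases lt_or_gt_of_ne hne with hlt | hgt
            · have hlr : (l + n).toNat < r := by omega
              have hIH := (IH _ hlr).1 i
              rw [show -(n : ℤ) + ((l + n).toNat : ℤ) = l from by omega] at hIH
              rw [hIH, sub_self, mul_zero]
            · rw [hpow i i _ (by omega), zero_mul]
        have hder : ((m + 1 : ℤ) : ℂ) * (g i i).coeff (m + 1) = 0 := by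
          rcases lt_trichotomy (m + 1) 0 with h | h | h
          · rw [hpow i i _ h, mul_zero]
          · rw [h]
            simp
          · rw [(hudiag i).2 (m + 1) h (by omega), mul_zero]
        rw [hsum, hder, add_zero] at hE
        exact sub_eq_zero.mp hE
    refine ⟨part1, ?_⟩
    intro i j hij
    set m : ℤ := -(n : ℤ) + r with hm
    have hE := E' i j m
    have hmem : -(n : ℤ) ∈ Finset.Icc (-(n : ℤ)) ((n : ℤ) - 2) := by
      rw [Finset.mem_Icc]
      omega
    have hsum : (∑ l ∈ Finset.Icc (-(n : ℤ)) ((n : ℤ) - 2),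
        (g i j).coeff (m - l) * ((B j j).coeff l - (C i i).coeff l))
        = (g i j).coeff (m + n) * ((B j j).coeff (-(n : ℤ)) - (C i i).coeff (-(n : ℤ))) := by
      rw [Finset.sum_eq_single_of_mem (-(n : ℤ)) hmem ?_]
      · rw [sub_neg_eq_add]
      · intro l hl hne
        rw [Finset.mem_Icc] at hl
        rcases lt_or_ge (m - l) 0 with hlt | hge
        · rw [hpow i j _ hlt, zero_mul]
        · have hlr : (m - l).toNat < r := by omega
          have hIH := (IH _ hlr).2 i j hij
          rw [show (((m - l).toNat : ℕ) : ℤ) = m - l from by omega] at hIH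
          rw [hIH, zero_mul]
    have h0 : (C i i).coeff (-(n : ℤ)) = (B i i).coeff (-(n : ℤ)) := by
      rcases Nat.eq_zero_or_pos r with h | h
      · have := part1 i
        rw [hm, h] at this
        simpa using this.symm
      · have := (IH 0 h).1 i
        simpa using this.symm
    have hfac : (B j j).coeff (-(n : ℤ)) - (C i i).coeff (-(n : ℤ)) ≠ 0 := by
      rw [h0]
      intro hcontra
      exact hij ((hB_lead_distinct (sub_eq_zero.mp hcontra)).symm)
    have hder : ((m + 1 : ℤ) : ℂ) * (g i j).coeff (m + 1) = 0 := by
      rcases lt_trichotomy (m + 1) 0 with h | h | h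
      · rw [hpow i j _ h, mul_zero]
      · rw [h]
        simp
      · have hlt : (m + 1).toNat < r := by omega
        have hIH := (IH _ hlt).2 i j hij
        rw [show (((m + 1).toNat : ℕ) : ℤ) = m + 1 from by omega] at hIH
        rw [hIH, mul_zero]
    rw [hsum, hder, add_zero] at hE
    have hz : (g i j).coeff (m + n) = 0 := (mul_eq_zero.mp hE).resolve_right hfac
    rwa [show m + (n : ℤ) = ((r : ℕ) : ℤ) from by omega] at hz
  -- conclude
  refine Matrix.ext fun i j => ?_
  by_cases hij : i = j
  · subst hij
    ext k
    by_cases hk : k < -(n : ℤ) ∨ (n : ℤ) - 1 ≤ k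
    · rw [hB_supp k hk i i, hC_supp k hk i i]
    · push_neg at hk
      have hkey := (key (k + n).toNat).1 i
      rwa [show -(n : ℤ) + ((k + n).toNat : ℤ) = k from by omega] at hkey
  · rw [hBoff i j hij, hCoff i j hij]
end
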